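/- For a triangle T in ℝ² with vertices q_i, q_j, q_k, the piecewise-linear (barycentric) basis functions φ_i, φ_j satisfy ∇φ_i · ∇φ_j = -cot(θ_k)/(2|T|) on T, where θ_k is the interior angle at the vertex q_k opposite the edge connecting q_i and q_j, and |T| is the area of T. -/

import Mathlib

open EuclideanGeometry

theorem grad_dot_eq_neg_cot {qi qj qk : EuclideanSpace ℝ (Fin 2)}
    (hT : AffineIndependent ℝ ![qi, qj, qk])
    (gi gj : EuclideanSpace ℝ (Fin 2)) (ci cj : ℝ)
    (hii : inner ℝ gi qi + ci = (1 : ℝ)) (hij : inner ℝ gi qj + ci = (0 : ℝ))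
    (hik : inner ℝ gi qk + ci = (0 : ℝ))
    (hji : inner ℝ gj qi + cj = (0 : ℝ)) (hjj : inner ℝ gj qj + cj = (1 : ℝ))
    (hjk : inner ℝ gj qk + cj = (0 : ℝ))
    (area : ℝ)
    (harea : area = |(qj - qi) 0 * (qk - qi) 1 - (qj - qi) 1 * (qk - qi) 0| / 2)
    (θ : ℝ) (hθ : θ = ∠ qi qk qj) :
    (inner ℝ gi gj : ℝ) = -(Real.cos θ / Real.sin θ) / (2 * area) := by
  have hinner : ∀ u v : EuclideanSpace ℝ (Fin 2),
      (inner ℝ u v : ℝ) = u 0 * v 0 + u 1 * v 1 := by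
    intro u v
    simp [PiLp.inner_apply, RCLike.inner_apply, Fin.sum_univ_two]
    ring
  rw [hinner] at hii hij hik hji hjj hjk
  have h1 : gi 0 * (qi 0 - qk 0) + gi 1 * (qi 1 - qk 1) = 1 := by
    linear_combination hii - hik
  have h2 : gi 0 * (qj 0 - qk 0) + gi 1 * (qj 1 - qk 1) = 0 := by
    linear_combination hij - hik
  have h3 : gj 0 * (qi 0 - qk 0) + gj 1 * (qi 1 - qk 1) = 0 := by
    linear_combination hji - hjk
  have h4 : gj 0 * (qj 0 - qk 0) + gj 1 * (qj 1 - qk 1) = 1 := by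
    linear_combination hjj - hjk
  set x0 : ℝ := qi 0 - qk 0 with hx0
  set x1 : ℝ := qi 1 - qk 1 with hx1
  set y0 : ℝ := qj 0 - qk 0 with hy0
  set y1 : ℝ := qj 1 - qk 1 with hy1
  set D : ℝ := x0 * y1 - x1 * y0 with hD
  have hDE : D * (gi 0 * gj 1 - gi 1 * gj 0) = 1 := by
    rw [hD]; linear_combination (gj 0 * y0 + gj 1 * y1) * h1 - (gj 0 * x0 + gj 1 * x1) * h2 + h4
  have hDne : D ≠ 0 := by
    intro h; rw [h, zero_mul] at hDE; exact one_ne_zero hDE.symm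
  have hgi0 : gi 0 * D = y1 := by rw [hD]; linear_combination y1 * h1 - x1 * h2
  have hgi1 : gi 1 * D = -y0 := by rw [hD]; linear_combination (-y0) * h1 + x0 * h2
  have hgj0 : gj 0 * D = -x1 := by rw [hD]; linear_combination (-x1) * h4 + y1 * h3
  have hgj1 : gj 1 * D = x0 := by rw [hD]; linear_combination x0 * h4 - y0 * h3
  set P : ℝ := x0 * y0 + x1 * y1 with hP
  have key : (inner ℝ gi gj : ℝ) = -P / D ^ 2 := by
    rw [hinner, eq_div_iff (pow_ne_zero 2 hDne), hP]
    linear_combination (gj 0 * D) * hgi0 + (gj 1 * D) * hgi1 + y1 * hgj0 + (-y0) * hgj1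
  set x : EuclideanSpace ℝ (Fin 2) := qi - qk with hx
  set y : EuclideanSpace ℝ (Fin 2) := qj - qk with hy
  have hxc0 : x 0 = x0 := by rw [hx, hx0]; simp
  have hxc1 : x 1 = x1 := by rw [hx, hx1]; simp
  have hyc0 : y 0 = y0 := by rw [hy, hy0]; simp
  have hyc1 : y 1 = y1 := by rw [hy, hy1]; simp
  have hxx : (inner ℝ x x : ℝ) = x0 * x0 + x1 * x1 := by rw [hinner, hxc0, hxc1]
  have hyy : (inner ℝ y y : ℝ) = y0 * y0 + y1 * y1 := by rw [hinner, hyc0, hyc1]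
  have hxy : (inner ℝ x y : ℝ) = P := by rw [hinner, hxc0, hxc1, hyc0, hyc1, hP]
  have hθ' : θ = InnerProductGeometry.angle x y := by
    rw [hθ, EuclideanGeometry.angle, hx, hy, vsub_eq_sub, vsub_eq_sub]
  have hnx : ‖x‖ * ‖y‖ ≠ 0 := by
    intro h
    rcases mul_eq_zero.1 h with h' | h'
    · have hx' : x = 0 := norm_eq_zero.1 h'
      apply hDne
      rw [hD, ← hxc0, ← hxc1, hx']
      simp
    · have hy' : y = 0 := norm_eq_zero.1 h'
      apply hDne
      rw [hD, ← hyc0, ← hyc1, hy']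
      simp
  have hcos : Real.cos θ = P / (‖x‖ * ‖y‖) := by
    rw [hθ', InnerProductGeometry.cos_angle, hxy]
  have hsin : Real.sin θ = |D| / (‖x‖ * ‖y‖) := by
    rw [eq_div_iff hnx, hθ', InnerProductGeometry.sin_angle_mul_norm_mul_norm,
      hxx, hyy, hxy]
    have harg : (x0 * x0 + x1 * x1) * (y0 * y0 + y1 * y1) - P * P = D ^ 2 := by
      rw [hP, hD]; ring
    rw [harg, Real.sqrt_sq_eq_abs]
  have habsD : |D| ≠ 0 := abs_ne_zero.2 hDne
  have hcot : Real.cos θ / Real.sin θ = P / |D| := by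
    rw [hcos, hsin]
    field_simp
    rw [mul_assoc, mul_div_assoc, div_self hnx, mul_one]
  have hareaD : area = |D| / 2 := by
    rw [harea]
    congr 1
    have e0 : (qj - qi) 0 = qj 0 - qi 0 := by simp
    have e1 : (qj - qi) 1 = qj 1 - qi 1 := by simp
    have f0 : (qk - qi) 0 = qk 0 - qi 0 := by simp
    have f1 : (qk - qi) 1 = qk 1 - qi 1 := by simp
    rw [e0, e1, f0, f1]
    congr 1
    rw [hD, hx0, hx1, hy0, hy1]; ring
  rw [key, hcot, hareaD]
  rw [show (2 : ℝ) * (|D| / 2) = |D| by ring]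
  rw [show -(P / |D|) / |D| = -P / (|D| * |D|) by ring, abs_mul_abs_self]
  ring
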